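/- Let M be a monoid, N a sharp fs monoid (sharp, saturated, and finitely generated), and i₁, i₂ : N → M morphisms of monoids, neither of which is injective. Then there exist elements n₁, n₂ ∈ N^gp \ N such that the saturation of the submonoid of N^gp generated by N, -n₁ and -n₂ is a sharp fs monoid, and i₁^gp(n₁) = 0 and i₂^gp(n₂) = 0. -/

import Mathlib

/-- `η : M →+ G` exhibits the abelian group `G` as the groupification of the
commutative monoid `M`. -/
def IsGroupification {M G : Type*} [AddCommMonoid M] [AddCommGroup G] (η : M →+ G) : Prop :=
  (∀ x : G, ∃ a b : M, x = η a - η b) ∧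
  (∀ a b : M, η a = η b ↔ ∃ k : M, a + k = b + k)

/-- A commutative monoid is sharp if its unit group is trivial. -/
def IsSharp (M : Type*) [AddCommMonoid M] : Prop := ∀ x : M, IsAddUnit x → x = 0

/-- A morphism of monoids is local if the preimage of the unit group is the unit group. -/
def IsLocalMonoidHom {N M : Type*} [AddCommMonoid N] [AddCommMonoid M] (f : N →+ M) : Prop :=
  ∀ n : N, IsAddUnit (f n) → IsAddUnit n

/-- `(P, iM, iL)` is the push-out `M ⊔_N L` of `f : N →+ M` and `g : N →+ L` in the
category of commutative monoids. -/
def IsMonPushout {N M L P : Type*} [AddCommMonoid N] [AddCommMonoid M] [AddCommMonoid L]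
    [AddCommMonoid P] (f : N →+ M) (g : N →+ L) (iM : M →+ P) (iL : L →+ P) : Prop :=
  iM.comp f = iL.comp g ∧
  ∀ (Q : Type*) [AddCommMonoid Q] (jM : M →+ Q) (jL : L →+ Q),
    jM.comp f = jL.comp g → ∃! h : P →+ Q, h.comp iM = jM ∧ h.comp iL = jL

/-- The saturation of a subset `P` of an abelian group `G`:
`P^sat = { x ∈ G | ∃ a ≥ 1, a • x ∈ P }`. -/
def saturationOf {G : Type*} [AddCommGroup G] (P : Set G) : Set G :=
  {x : G | ∃ a : ℕ, 0 < a ∧ a • x ∈ P}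

open AddSubmonoid in
lemma mem_closure_range_iff' {G : Type*} [AddCommMonoid G] {k : ℕ} (g : Fin k → G) (x : G) :
    x ∈ closure (Set.range g) ↔ ∃ c : Fin k → ℕ, x = ∑ i, c i • g i := by
  classical
  constructor
  · intro hx
    induction hx using closure_induction with
    | mem y hy =>
      obtain ⟨i, rfl⟩ := hy
      exact ⟨fun j => if j = i then 1 else 0, by simp⟩
    | zero => exact ⟨0, by simp⟩
    | add a b ha hb iha ihb =>
      obtain ⟨c, rfl⟩ := iha
      obtain ⟨d, rfl⟩ := ihb
      exact ⟨c + d, by rw [← Finset.sum_add_distrib]; simp [add_nsmul]⟩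
  · rintro ⟨c, rfl⟩
    exact sum_mem _ fun i _ => nsmul_mem (subset_closure (Set.mem_range_self i)) _

lemma sat_add_mem {G : Type*} [AddCommGroup G] (S : AddSubmonoid G) {x y : G}
    (hx : x ∈ saturationOf (S : Set G)) (hy : y ∈ saturationOf (S : Set G)) :
    x + y ∈ saturationOf (S : Set G) := by
  obtain ⟨a, ha, hax⟩ := hx
  obtain ⟨c, hc, hcy⟩ := hy
  refine ⟨a * c, Nat.mul_pos ha hc, ?_⟩
  rw [smul_add]
  exact AddSubmonoid.add_mem _ (by rw [mul_comm, mul_smul]; exact AddSubmonoid.nsmul_mem _ hax c)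
    (by rw [mul_smul]; exact AddSubmonoid.nsmul_mem _ hcy a)

lemma gordan {G : Type*} [AddCommGroup G] {ι : Type*} [Fintype ι] (b : Module.Basis ι ℤ G)
    {k : ℕ} (g : Fin k → G) :
    ∃ T : Finset G, ↑(AddSubmonoid.closure (T : Set G)) =
      saturationOf (↑(AddSubmonoid.closure (Set.range g)) : Set G) := by
  classical
  set S := AddSubmonoid.closure (Set.range g) with hS
  set D : Set G := {x | ∃ (d : ℕ) (c : Fin k → ℕ), 0 < d ∧ (∀ i, c i ≤ d) ∧
      d • x = ∑ i, c i • g i} with hD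
  have hgS : ∀ x ∈ D, x ∈ saturationOf (S : Set G) := by
    rintro x ⟨d, c, hd, _, hdx⟩
    exact ⟨d, hd, by
      rw [hdx]
      exact AddSubmonoid.sum_mem _ fun i _ =>
        AddSubmonoid.nsmul_mem _ (AddSubmonoid.subset_closure (Set.mem_range_self i)) _⟩
  -- D is finite
  set f : G → ι → ℤ := fun x j => b.repr x j with hf
  have hfinj : Function.Injective f := by
    intro x y h
    apply b.repr.injective
    ext j
    exact congrFun h j
  set B : ι → ℤ := fun j => ∑ i, |f (g i) j| with hB
  have hDsub : D ⊆ f ⁻¹' (Set.univ.pi fun j => Set.Icc (-(B j)) (B j)) := by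
    rintro x ⟨d, c, hd, hc, hdx⟩ j _
    have h1 : (d : ℤ) * f x j = ∑ i, (c i : ℤ) * f (g i) j := by
      have h2 := congrArg (fun z => (b.repr z) j) hdx
      simpa [f, Finsupp.smul_apply, nsmul_eq_mul] using h2
    have h3 : |(d : ℤ) * f x j| ≤ (d : ℤ) * B j := by
      rw [h1, hB]
      calc |∑ i, (c i : ℤ) * f (g i) j| ≤ ∑ i, |(c i : ℤ) * f (g i) j| :=
            Finset.abs_sum_le_sum_abs _ _
        _ ≤ ∑ i, (d : ℤ) * |f (g i) j| := by
            refine Finset.sum_le_sum fun i _ => ?_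
            rw [abs_mul, abs_of_nonneg (by positivity : (0:ℤ) ≤ (c i : ℤ))]
            exact mul_le_mul_of_nonneg_right (by exact_mod_cast hc i) (abs_nonneg _)
        _ = (d : ℤ) * ∑ i, |f (g i) j| := (Finset.mul_sum _ _ _).symm
    have hd' : (0 : ℤ) < d := by exact_mod_cast hd
    have h4 : |f x j| ≤ B j := by
      rw [abs_mul, abs_of_pos hd'] at h3
      exact le_of_mul_le_mul_left h3 hd'
    exact Set.mem_Icc.mpr ⟨neg_le_of_abs_le h4, le_of_abs_le h4⟩
  have hDfin : D.Finite := by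
    refine Set.Finite.of_finite_image (f := f) ?_ hfinj.injOn
    exact Set.Finite.subset (Set.Finite.pi fun j => Set.finite_Icc _ _)
      (Set.image_subset_iff.mpr hDsub)
  refine ⟨hDfin.toFinset, ?_⟩
  apply Set.Subset.antisymm
  · intro x hx
    have hle : AddSubmonoid.closure (hDfin.toFinset : Set G) ≤
        { carrier := saturationOf (S : Set G)
          zero_mem' := ⟨1, one_pos, by simpa using S.zero_mem⟩
          add_mem' := fun hx hy => sat_add_mem S hx hy } := by
      rw [AddSubmonoid.closure_le]
      intro y hy
      exact hgS y (by simpa using hy)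
    exact hle hx
  · rintro x ⟨a, ha, hax⟩
    obtain ⟨c, hc⟩ := (mem_closure_range_iff' g _).mp hax
    set m : Fin k → ℕ := fun i => c i / a with hm
    set r : Fin k → ℕ := fun i => c i % a with hr
    have key : a • (x - ∑ i, m i • g i) = ∑ i, r i • g i := by
      rw [smul_sub, hc, Finset.smul_sum, ← Finset.sum_sub_distrib]
      refine Finset.sum_congr rfl fun i _ => ?_
      rw [smul_smul]
      have : c i = a * m i + r i := (Nat.div_add_mod (c i) a).symm
      rw [this, add_nsmul]
      abel
    have hy : (x - ∑ i, m i • g i) ∈ D :=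
      ⟨a, r, ha, fun i => le_of_lt (Nat.mod_lt _ ha), key⟩
    have hgD : ∀ i, g i ∈ D := fun i =>
      ⟨1, fun j => if j = i then 1 else 0, one_pos, fun j => by by_cases h : j = i <;> simp [h], by simp⟩
    have : x = (x - ∑ i, m i • g i) + ∑ i, m i • g i := by abel
    rw [this]
    refine AddSubmonoid.add_mem _ (AddSubmonoid.subset_closure (by simpa using hy)) ?_
    exact AddSubmonoid.sum_mem _ fun i _ =>
      AddSubmonoid.nsmul_mem _ (AddSubmonoid.subset_closure (by simpa using hgD i)) _

lemma mem_closure_union_pair {G : Type*} [AddCommGroup G] (P : AddSubmonoid G) (u v x : G) :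
    x ∈ AddSubmonoid.closure ((P : Set G) ∪ {u, v}) ↔
      ∃ p ∈ P, ∃ t s : ℕ, x = p + t • u + s • v := by
  constructor
  · intro hx
    induction hx using AddSubmonoid.closure_induction with
    | mem y hy =>
      rcases hy with hy | hy | hy
      · exact ⟨y, hy, 0, 0, by simp⟩
      · exact ⟨0, P.zero_mem, 1, 0, by simp [hy]⟩
      · exact ⟨0, P.zero_mem, 0, 1, by simp at hy; simp [hy]⟩
    | zero => exact ⟨0, P.zero_mem, 0, 0, by simp⟩
    | add x y hx hy ihx ihy =>
      obtain ⟨p, hp, t, s, rfl⟩ := ihx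
      obtain ⟨q, hq, t', s', rfl⟩ := ihy
      exact ⟨p + q, P.add_mem hp hq, t + t', s + s', by rw [add_nsmul, add_nsmul]; abel⟩
  · rintro ⟨p, hp, t, s, rfl⟩
    refine AddSubmonoid.add_mem _ (AddSubmonoid.add_mem _
      (AddSubmonoid.subset_closure (Or.inl hp)) ?_) ?_
    · exact AddSubmonoid.nsmul_mem _ (AddSubmonoid.subset_closure (by simp)) t
    · exact AddSubmonoid.nsmul_mem _ (AddSubmonoid.subset_closure (by simp)) s

lemma sharp_sat {G : Type*} [AddCommGroup G] (P : AddSubmonoid G)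
    (hTF : ∀ (d : ℕ) (x : G), 0 < d → d • x = 0 → x = 0)
    (hPsharp : ∀ x : G, x ∈ P → -x ∈ P → x = 0)
    (n₁ n₂ : G)
    (hK : ∀ T S : ℕ, T • n₁ + S • n₂ ∈ P → T = 0 ∧ S = 0)
    {x : G} (hx : x ∈ saturationOf (↑(AddSubmonoid.closure ((P : Set G) ∪ {-n₁, -n₂})) : Set G))
    (hx' : -x ∈ saturationOf (↑(AddSubmonoid.closure ((P : Set G) ∪ {-n₁, -n₂})) : Set G)) :
    x = 0 := by
  obtain ⟨a, ha, hax⟩ := hx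
  obtain ⟨c, hc, hcx⟩ := hx'
  rw [SetLike.mem_coe, mem_closure_union_pair] at hax hcx
  obtain ⟨p, hp, t, s, hax⟩ := hax
  obtain ⟨q, hq, t', s', hcx⟩ := hcx
  have h4 : c • (a • x) + a • (c • -x) = 0 := by
    simp only [smul_neg, smul_smul, mul_comm a c]
    exact add_neg_cancel _
  rw [hax, hcx] at h4
  have hmem : (c*t + a*t') • n₁ + (c*s + a*s') • n₂ ∈ P := by
    have key : c • p + a • q = (c*t + a*t') • n₁ + (c*s + a*s') • n₂ := by
      rw [← sub_eq_zero, ← h4]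
      simp only [smul_add, smul_smul, smul_neg, add_nsmul]
      abel
    rw [← key]
    exact P.add_mem (AddSubmonoid.nsmul_mem _ hp c) (AddSubmonoid.nsmul_mem _ hq a)
  obtain ⟨hT, hS⟩ := hK _ _ hmem
  have ht : t = 0 := by
    rcases Nat.mul_eq_zero.mp (Nat.eq_zero_of_add_eq_zero_right hT) with h | h
    · omega
    · exact h
  have ht' : t' = 0 := by
    rcases Nat.mul_eq_zero.mp (Nat.eq_zero_of_add_eq_zero_left hT) with h | h
    · omega
    · exact h
  have hs : s = 0 := by
    rcases Nat.mul_eq_zero.mp (Nat.eq_zero_of_add_eq_zero_right hS) with h | h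
    · omega
    · exact h
  have hs' : s' = 0 := by
    rcases Nat.mul_eq_zero.mp (Nat.eq_zero_of_add_eq_zero_left hS) with h | h
    · omega
    · exact h
  subst ht ht' hs hs'
  simp only [zero_smul, add_zero] at hax hcx
  -- a • x = p, c • (-x) = q
  have hcp : c • p ∈ P := AddSubmonoid.nsmul_mem _ hp c
  have hcpneg : -(c • p) ∈ P := by
    have : -(c • p) = a • q := by
      rw [← hax, ← hcx, smul_smul, smul_smul, smul_neg, mul_comm]
    rw [this]
    exact AddSubmonoid.nsmul_mem _ hq a
  have hp0 : p = 0 := hTF c p hc (hPsharp _ hcp hcpneg)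
  exact hTF a x ha (by rw [hax, hp0])

/-- Let `M` be a monoid, `N` a sharp fs monoid, and `i₁, i₂ : N → M` morphisms of monoids,
neither of which is injective.  Then there exist `n₁, n₂ ∈ N^gp \ N` such that the
saturation of the submonoid of `N^gp` generated by `N`, `-n₁` and `-n₂` is a sharp fs
monoid, and `i₁^gp n₁ = 0` and `i₂^gp n₂ = 0`.  Here `N` is realized inside its
groupification `GN` via `ηN`, and `I₁, I₂` are the morphisms induced by `i₁, i₂` on
groupifications. -/
theorem stmt2 {N M GN GM : Type*} [AddCommMonoid N] [AddCommMonoid M]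
    [AddCommGroup GN] [AddCommGroup GM]
    (ηN : N →+ GN) (hgpN : IsGroupification ηN) (hNinj : Function.Injective ηN)
    (hNsharp : IsSharp N) (hNfg : AddMonoid.FG N)
    (hNsat : ∀ x : GN, (∃ a : ℕ, 0 < a ∧ a • x ∈ AddMonoidHom.mrange ηN) →
      x ∈ AddMonoidHom.mrange ηN)
    (ηM : M →+ GM) (hgpM : IsGroupification ηM)
    (i₁ i₂ : N →+ M)
    (h₁ : ¬ Function.Injective i₁) (h₂ : ¬ Function.Injective i₂)
    (I₁ I₂ : GN →+ GM)
    (hI₁ : I₁.comp ηN = ηM.comp i₁) (hI₂ : I₂.comp ηN = ηM.comp i₂) :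
    ∃ n₁ n₂ : GN,
      n₁ ∉ AddMonoidHom.mrange ηN ∧ n₂ ∉ AddMonoidHom.mrange ηN ∧
      I₁ n₁ = 0 ∧ I₂ n₂ = 0 ∧
      (∀ x ∈ saturationOf
          (↑(AddSubmonoid.closure ((AddMonoidHom.mrange ηN : Set GN) ∪ {-n₁, -n₂})) : Set GN),
        -x ∈ saturationOf
          (↑(AddSubmonoid.closure ((AddMonoidHom.mrange ηN : Set GN) ∪ {-n₁, -n₂})) : Set GN) →
        x = 0) ∧
      (∀ x : GN, (∃ a : ℕ, 0 < a ∧ a • x ∈ saturationOf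
          (↑(AddSubmonoid.closure ((AddMonoidHom.mrange ηN : Set GN) ∪ {-n₁, -n₂})) : Set GN)) →
        x ∈ saturationOf
          (↑(AddSubmonoid.closure ((AddMonoidHom.mrange ηN : Set GN) ∪ {-n₁, -n₂})) : Set GN)) ∧
      (∃ S : Finset GN,
        (↑(AddSubmonoid.closure (S : Set GN)) : Set GN) =
          saturationOf
            (↑(AddSubmonoid.closure ((AddMonoidHom.mrange ηN : Set GN) ∪ {-n₁, -n₂})) : Set GN)) := by
  classical
  set P : AddSubmonoid GN := AddMonoidHom.mrange ηN with hPdef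
  -- sharpness of P inside GN
  have hPsharp : ∀ x : GN, x ∈ P → -x ∈ P → x = 0 := by
    rintro x ⟨a, rfl⟩ ⟨b, hb⟩
    have h0 : ηN (a + b) = ηN 0 := by
      rw [map_add, hb, map_zero, add_neg_cancel]
    have hab : a + b = 0 := hNinj h0
    have := hNsharp a (isAddUnit_iff_exists.mpr ⟨b, hab, by rwa [add_comm] at hab⟩)
    rw [this, map_zero]
  -- torsion-freeness of GN
  have hTF : ∀ (d : ℕ) (x : GN), 0 < d → d • x = 0 → x = 0 := by
    intro d x hd hdx
    have hxP : x ∈ P := hNsat x ⟨d, hd, by rw [hdx]; exact P.zero_mem⟩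
    obtain ⟨a, rfl⟩ := hxP
    have h0 : ηN (d • a) = ηN 0 := by rw [map_nsmul, hdx, map_zero]
    have hda : d • a = 0 := hNinj h0
    obtain ⟨e, rfl⟩ : ∃ e, d = e + 1 := ⟨d - 1, by omega⟩
    have hsplit : (e + 1) • a = a + e • a := by
      rw [add_nsmul, one_nsmul, add_comm]
    have hu : IsAddUnit a :=
      isAddUnit_iff_exists.mpr ⟨e • a, by rw [← hsplit]; exact hda,
        by rw [add_comm, ← hsplit]; exact hda⟩
    rw [hNsharp a hu, map_zero]
  -- ray lemma
  have hray : ∀ m : GN, m ∉ P → ∀ T : ℕ, T • m ∈ P → T = 0 := by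
    intro m hm T hTm
    by_contra hT
    exact hm (hNsat m ⟨T, Nat.pos_of_ne_zero hT, hTm⟩)
  -- extraction of kernel elements
  have hextract : ∀ (i : N →+ M) (I : GN →+ GM), I.comp ηN = ηM.comp i →
      ¬ Function.Injective i → ∃ v : GN, v ∉ P ∧ I v = 0 ∧ I (-v) = 0 := by
    intro i I hI hinj
    obtain ⟨a, b, hab, hne⟩ := Function.not_injective_iff.mp hinj
    have hIa : I (ηN a) = ηM (i a) := DFunLike.congr_fun hI a
    have hIb : I (ηN b) = ηM (i b) := DFunLike.congr_fun hI b
    set v : GN := ηN a - ηN b with hv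
    have hIv : I v = 0 := by
      rw [hv, map_sub, hIa, hIb, hab, sub_self]
    have hvne : v ≠ 0 := by
      intro h
      exact hne (hNinj (sub_eq_zero.mp h))
    by_cases hvP : v ∈ P
    · refine ⟨-v, fun hnv => ?_, by rw [map_neg, hIv, neg_zero], by rw [neg_neg, hIv]⟩
      exact hvne (hPsharp v hvP hnv)
    · exact ⟨v, hvP, hIv, by rw [map_neg, hIv, neg_zero]⟩
  obtain ⟨v₁, hv₁, hIv₁, hIv₁'⟩ := hextract i₁ I₁ hI₁ h₁
  obtain ⟨v₂, hv₂, hIv₂, hIv₂'⟩ := hextract i₂ I₂ hI₂ h₂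
  -- easy K lemma
  have Keasy : ∀ m₁ m₂ : GN, m₁ ∉ P → m₂ ∉ P → -m₁ ∈ P →
      ∀ T S : ℕ, T • m₁ + S • m₂ ∈ P → T = 0 ∧ S = 0 := by
    intro m₁ m₂ hm₁ hm₂ hneg T S hTS
    have hS : S • m₂ ∈ P := by
      have heq : S • m₂ = (T • m₁ + S • m₂) + T • (-m₁) := by
        rw [smul_neg]; abel
      rw [heq]
      exact P.add_mem hTS (AddSubmonoid.nsmul_mem _ hneg T)
    have hS0 : S = 0 := hray m₂ hm₂ S hS
    subst hS0
    refine ⟨hray m₁ hm₁ T ?_, rfl⟩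
    simpa using hTS
  -- choice of n₁, n₂ with the joint condition K
  have hchoice : ∃ n₁ n₂ : GN, n₁ ∉ P ∧ n₂ ∉ P ∧ I₁ n₁ = 0 ∧ I₂ n₂ = 0 ∧
      ∀ T S : ℕ, T • n₁ + S • n₂ ∈ P → T = 0 ∧ S = 0 := by
    by_cases h1 : -v₁ ∈ P
    · exact ⟨v₁, v₂, hv₁, hv₂, hIv₁, hIv₂, Keasy v₁ v₂ hv₁ hv₂ h1⟩
    by_cases h2 : -v₂ ∈ P
    · refine ⟨v₁, v₂, hv₁, hv₂, hIv₁, hIv₂, fun T S hTS => ?_⟩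
      have := Keasy v₂ v₁ hv₂ hv₁ h2 S T (by rwa [add_comm])
      exact ⟨this.2, this.1⟩
    by_cases hK12 : ∀ T S : ℕ, T • v₁ + S • v₂ ∈ P → T = 0 ∧ S = 0
    · exact ⟨v₁, v₂, hv₁, hv₂, hIv₁, hIv₂, hK12⟩
    refine ⟨v₁, -v₂, hv₁, h2, hIv₁, hIv₂', fun T S hTS => ?_⟩
    -- if this also failed we would get a contradiction, so prove it directly:
    by_contra hne
    -- get positive witnesses for the failure of hK12
    have hfail : ∃ T' S' : ℕ, 0 < T' ∧ 0 < S' ∧ T' • v₁ + S' • v₂ ∈ P := by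
      push_neg at hK12
      obtain ⟨T', S', hTS', hne'⟩ := hK12
      have hT' : T' ≠ 0 := by
        intro h0
        subst h0
        have hS0 := hray v₂ hv₂ S' (by simpa using hTS')
        exact (hne' (by simp)) hS0
      have hS' : S' ≠ 0 := by
        intro h0
        subst h0
        have hT0 := hray v₁ hv₁ T' (by simpa using hTS')
        omega
      exact ⟨T', S', Nat.pos_of_ne_zero hT', Nat.pos_of_ne_zero hS', hTS'⟩
    obtain ⟨T₁, S₁, hT₁, hS₁, hp₁⟩ := hfail
    -- similarly, current T, S must be positive
    have hT : T ≠ 0 := by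
      intro h0
      subst h0
      have hS0 := hray (-v₂) h2 S (by simpa using hTS)
      exact hne ⟨rfl, hS0⟩
    have hS : S ≠ 0 := by
      intro h0
      subst h0
      have hT0 := hray v₁ hv₁ T (by simpa using hTS)
      exact hne ⟨hT0, rfl⟩
    -- combine: S • p₁ + S₁ • p₂ is a positive multiple of v₁ in P
    have hcomb : S • (T₁ • v₁ + S₁ • v₂) + S₁ • (T • v₁ + S • (-v₂)) =
        (S * T₁ + S₁ * T) • v₁ := by
      simp only [smul_add, smul_smul, smul_neg, add_nsmul]
      rw [mul_comm S₁ S]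
      abel
    have hmem : (S * T₁ + S₁ * T) • v₁ ∈ P := by
      rw [← hcomb]
      exact P.add_mem (AddSubmonoid.nsmul_mem _ hp₁ S) (AddSubmonoid.nsmul_mem _ hTS S₁)
    have := hray v₁ hv₁ _ hmem
    have : S * T₁ = 0 ∧ S₁ * T = 0 := by omega
    rcases Nat.mul_eq_zero.mp this.1 with h | h <;> omega
  obtain ⟨n₁, n₂, hn₁, hn₂, hIn₁, hIn₂, hK⟩ := hchoice
  refine ⟨n₁, n₂, hn₁, hn₂, hIn₁, hIn₂, ?_, ?_, ?_⟩
  · -- sharpness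
    intro x hx hx'
    exact sharp_sat P hTF hPsharp n₁ n₂ hK hx hx'
  · -- saturatedness
    rintro x ⟨a, ha, b, hb, hba⟩
    refine ⟨b * a, Nat.mul_pos hb ha, ?_⟩
    rwa [mul_smul]
  · -- finite generation
    obtain ⟨F0, hF0⟩ := hNfg.fg_top
    -- GN is a finitely generated abelian group
    have hsuble : AddSubmonoid.closure (⇑ηN '' ↑F0) ≤
        (AddSubgroup.closure (⇑ηN '' ↑F0)).toAddSubmonoid :=
      AddSubmonoid.closure_le.mpr fun z hz => AddSubgroup.subset_closure hz
    have hclP : AddSubmonoid.closure (⇑ηN '' ↑F0) = P := by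
      rw [hPdef, AddMonoidHom.mrange_eq_map, ← hF0, AddMonoidHom.map_mclosure]
    have hmemcl : ∀ n : N, ηN n ∈ AddSubgroup.closure (⇑ηN '' ↑F0) := by
      intro n
      exact hsuble (hclP ▸ (⟨n, rfl⟩ : ηN n ∈ P))
    have htop : AddSubgroup.closure (⇑ηN '' ↑F0) = ⊤ := by
      rw [eq_top_iff]
      intro x _
      obtain ⟨a, b, rfl⟩ := hgpN.1 x
      exact AddSubgroup.sub_mem _ (hmemcl a) (hmemcl b)
    haveI hGNfg : AddGroup.FG GN := ⟨⟨F0.image ηN, by rwa [Finset.coe_image]⟩⟩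
    haveI : Module.Finite ℤ GN := Module.Finite.iff_addGroup_fg.mpr hGNfg
    haveI : NoZeroSMulDivisors ℤ GN := by
      refine ⟨fun {cc} {x} h => ?_⟩
      by_cases hcc : cc = 0
      · exact Or.inl hcc
      · refine Or.inr ?_
        have habs : (cc.natAbs : ℤ) • x = 0 := by
          rcases Int.natAbs_eq cc with h' | h'
          · rw [h'] at h; exact h
          · rw [h', neg_smul, neg_eq_zero] at h; exact h
        rw [natCast_zsmul] at habs
        exact hTF cc.natAbs x (Int.natAbs_pos.mpr hcc) habs
    haveI : Module.Free ℤ GN := Module.free_of_finite_type_torsion_free'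
    set b := Module.Free.chooseBasis ℤ GN with hbasis
    set F : Finset GN := F0.image ηN ∪ {-n₁, -n₂} with hF
    set g : Fin F.card → GN := fun i => (F.equivFin.symm i : GN) with hg
    have hrange : Set.range g = (F : Set GN) := by
      have h1 : Set.range g = Subtype.val '' Set.range (⇑F.equivFin.symm) :=
        (Set.range_comp _ _)
      rw [h1, Equiv.range_eq_univ, Set.image_univ]
      ext y
      simp
    have hcl : AddSubmonoid.closure (Set.range g) =
        AddSubmonoid.closure ((P : Set GN) ∪ {-n₁, -n₂}) := by
      rw [hrange, hF]
      push_cast [Finset.coe_union, Finset.coe_image, Finset.coe_insert, Finset.coe_singleton]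
      rw [AddSubmonoid.closure_union, AddSubmonoid.closure_union, hclP,
        AddSubmonoid.closure_eq]
    obtain ⟨T, hT⟩ := gordan b g
    exact ⟨T, by rw [hT, hcl]⟩
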